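/- For λ = 1/√2, the distribution function of the Bernoulli convolution is F_λ(x) = ((3/4)√2 + 1)x² for x ∈ [0, 1/(1+√2)], F_λ(x) = (1 + 1/√2)x − √2/4 for x ∈ [1/(1+√2), √2/(1+√2)], and F_λ(x) = 1 − (1 + (3/4)√2)(1−x)² for x ∈ [√2/(1+√2), 1]; i.e., this explicitly defined function satisfies the self-similarity equation F(x) = (1/2)(F(√2 x) + F(√2 x − (√2 − 1))) (with F ≡ 0 on (−∞,0] and F ≡ 1 on [1,∞)) and is a continuous increasing bijection of [0,1]. -/
import Mathlib


open Set

/-- The explicit distribution function of the Bernoulli convolution for `λ = 1/√2`. -/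
noncomputable def F12 (x : ℝ) : ℝ :=
  if x ≤ 0 then 0
  else if x ≤ 1 / (1 + Real.sqrt 2) then (3/4 * Real.sqrt 2 + 1) * x ^ 2
  else if x ≤ Real.sqrt 2 / (1 + Real.sqrt 2) then (1 + 1 / Real.sqrt 2) * x - Real.sqrt 2 / 4
  else if x ≤ 1 then 1 - (1 + 3/4 * Real.sqrt 2) * (1 - x) ^ 2
  else 1

lemma hs2 : Real.sqrt 2 ^ 2 = 2 := Real.sq_sqrt (by norm_num)
lemma h1s : 1 < Real.sqrt 2 := by nlinarith [hs2, Real.sqrt_nonneg 2]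
lemma hs32 : Real.sqrt 2 < 3/2 := by nlinarith [hs2, Real.sqrt_nonneg 2]
lemma ha : 1/(1+Real.sqrt 2) = Real.sqrt 2 - 1 := by
  field_simp
  linear_combination (-1 : ℝ)*hs2
lemma hb : Real.sqrt 2/(1+Real.sqrt 2) = 2 - Real.sqrt 2 := by
  field_simp
  linear_combination (1 : ℝ)*hs2
lemma hinv : (1:ℝ) / Real.sqrt 2 = Real.sqrt 2 / 2 := by
  rw [div_eq_div_iff (by positivity) (by norm_num)]
  linear_combination (-1:ℝ)*hs2

lemma FA {x : ℝ} (h : x ≤ 0) : F12 x = 0 := by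
  unfold F12; rw [if_pos h]

lemma FB {x : ℝ} (h0 : 0 ≤ x) (h : x ≤ Real.sqrt 2 - 1) :
    F12 x = (3/4 * Real.sqrt 2 + 1) * x ^ 2 := by
  unfold F12
  rw [ha]
  split_ifs with h1
  · have : x = 0 := le_antisymm h1 h0
    rw [this]; ring
  · rfl

lemma FC {x : ℝ} (h0 : Real.sqrt 2 - 1 ≤ x) (h : x ≤ 2 - Real.sqrt 2) :
    F12 x = (1 + Real.sqrt 2/2) * x - Real.sqrt 2 / 4 := by
  unfold F12
  rw [ha, hb, hinv]
  split_ifs with h1 h2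
  · exact absurd h1 (by nlinarith [h1s])
  · have hx : x = Real.sqrt 2 - 1 := le_antisymm h2 h0
    rw [hx]
    linear_combination (3/4 * Real.sqrt 2 - 1) * hs2
  · ring

lemma FD {x : ℝ} (h0 : 2 - Real.sqrt 2 ≤ x) (h : x ≤ 1) :
    F12 x = 1 - (1 + 3/4 * Real.sqrt 2) * (1 - x) ^ 2 := by
  unfold F12
  rw [ha, hb, hinv]
  split_ifs with h1 h2 h3
  · exact absurd h1 (by nlinarith [h1s, hs2])
  · exact absurd h2 (by nlinarith [h1s, hs2, h0])
  · have hx : x = 2 - Real.sqrt 2 := le_antisymm h3 h0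
    rw [hx]
    linear_combination (3/4 * Real.sqrt 2 - 1) * hs2
  · rfl

lemma FE {x : ℝ} (h : 1 ≤ x) : F12 x = 1 := by
  unfold F12
  rw [ha, hb]
  split_ifs with h1 h2 h3 h4
  · exact absurd h1 (by nlinarith [h1s])
  · exact absurd h2 (by nlinarith [h1s, hs32])
  · exact absurd h3 (by nlinarith [h1s, hs32])
  · have hx : x = 1 := le_antisymm h4 h
    rw [hx]; ring
  · rfl

lemma Fself (x : ℝ) : F12 x = (1/2) * (F12 (Real.sqrt 2 * x)
    + F12 (Real.sqrt 2 * x - (Real.sqrt 2 - 1))) := by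
  have e2 := hs2; have e1 := h1s; have e3 := hs32
  rcases le_or_gt x 0 with h0 | h0
  · rw [FA h0, FA (by nlinarith : Real.sqrt 2 * x ≤ 0),
      FA (by nlinarith : Real.sqrt 2 * x - (Real.sqrt 2 - 1) ≤ 0)]
    ring
  rcases le_or_gt x (1 - Real.sqrt 2/2) with h1 | h1
  · rw [FB h0.le (by nlinarith), FB (by nlinarith) (by nlinarith), FA (by nlinarith)]
    linear_combination (((-(3/8))*Real.sqrt 2 - 1/2) * x^2) * hs2
  rcases le_or_gt x (Real.sqrt 2 - 1) with h2 | h2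
  · rw [FB h0.le h2, FC (by nlinarith) (by nlinarith), FB (by nlinarith) (by nlinarith)]
    linear_combination ((((-(3/8)) + (3/4)*x - (3/8)*x^2)*Real.sqrt 2 + 1/4 - (1/2)*x^2)) * hs2
  rcases le_or_gt x (2 - Real.sqrt 2) with h3 | h3
  · rw [FC h2.le h3, FD (by nlinarith) (by nlinarith), FB (by nlinarith) (by nlinarith)]
    linear_combination ((((-(3/8)) + (3/4)*x)*Real.sqrt 2 + 1/4 - (1/2)*x)) * hs2
  rcases le_or_gt x (Real.sqrt 2/2) with h4 | h4
  · rw [FD h3.le (by nlinarith), FD (by nlinarith) (by nlinarith),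
      FC (by nlinarith) (by nlinarith)]
    linear_combination ((((3/8)*x^2)*Real.sqrt 2 + 1/4 - x + (1/2)*x^2)) * hs2
  rcases le_or_gt x 1 with h5 | h5
  · rw [FD (by nlinarith) h5, FE (by nlinarith), FD (by nlinarith) (by nlinarith)]
    linear_combination (((3/8 - (3/4)*x + (3/8)*x^2)*Real.sqrt 2 + 1/2 - x + (1/2)*x^2)) * hs2
  · rw [FE h5.le, FE (by nlinarith), FE (by nlinarith)]
    ring

lemma Fcont : Continuous F12 := by
  have e2 := hs2; have e1 := h1s; have e3 := hs32
  have c3 : Continuous fun x : ℝ =>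
      if x ≤ 1 then 1 - (1 + 3/4*Real.sqrt 2)*(1-x)^2 else 1 := by
    apply Continuous.if_le (by continuity) continuous_const continuous_id continuous_const
    intro x hx; replace hx : x = 1 := hx; rw [hx]; ring
  have c2 : Continuous fun x : ℝ =>
      if x ≤ Real.sqrt 2 / (1 + Real.sqrt 2) then (1 + 1/Real.sqrt 2)*x - Real.sqrt 2/4
      else if x ≤ 1 then 1 - (1 + 3/4*Real.sqrt 2)*(1-x)^2 else 1 := by
    apply Continuous.if_le (by continuity) c3 continuous_id continuous_const
    intro x hx
    replace hx : x = Real.sqrt 2 / (1 + Real.sqrt 2) := hx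
    rw [hb] at hx; subst hx
    rw [if_pos (by nlinarith : (2:ℝ) - Real.sqrt 2 ≤ 1), hinv]
    linear_combination (3/4*Real.sqrt 2 - 1) * hs2
  have c1 : Continuous fun x : ℝ =>
      if x ≤ 1 / (1 + Real.sqrt 2) then (3/4 * Real.sqrt 2 + 1) * x ^ 2
      else if x ≤ Real.sqrt 2 / (1 + Real.sqrt 2) then (1 + 1/Real.sqrt 2)*x - Real.sqrt 2/4
      else if x ≤ 1 then 1 - (1 + 3/4*Real.sqrt 2)*(1-x)^2 else 1 := by
    apply Continuous.if_le (by continuity) c2 continuous_id continuous_const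
    intro x hx
    replace hx : x = 1 / (1 + Real.sqrt 2) := hx
    rw [ha] at hx; subst hx
    rw [if_pos (by rw [hb]; nlinarith : Real.sqrt 2 - 1 ≤ Real.sqrt 2 / (1 + Real.sqrt 2)), hinv]
    linear_combination (3/4*Real.sqrt 2 - 1) * hs2
  have c0 : Continuous fun x : ℝ =>
      if x ≤ 0 then (0:ℝ)
      else if x ≤ 1 / (1 + Real.sqrt 2) then (3/4 * Real.sqrt 2 + 1) * x ^ 2
      else if x ≤ Real.sqrt 2 / (1 + Real.sqrt 2) then (1 + 1/Real.sqrt 2)*x - Real.sqrt 2/4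
      else if x ≤ 1 then 1 - (1 + 3/4*Real.sqrt 2)*(1-x)^2 else 1 := by
    apply Continuous.if_le continuous_const c1 continuous_id continuous_const
    intro x hx; replace hx : x = 0 := hx; subst hx
    rw [if_pos (by positivity : (0:ℝ) ≤ 1 / (1 + Real.sqrt 2))]
    ring
  exact c0

lemma Fmono : StrictMonoOn F12 (Set.Icc 0 1) := by
  intro x hx y hy hxy
  have e2 := hs2; have e1 := h1s; have e3 := hs32
  obtain ⟨hx0, hx1⟩ := hx; obtain ⟨hy0, hy1⟩ := hy
  rcases le_or_gt y (Real.sqrt 2 - 1) with hy2 | hy2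
  · rw [FB hx0 (le_trans hxy.le hy2), FB hy0 hy2]
    nlinarith [mul_pos (sub_pos.2 hxy) (show (0:ℝ) < y + x by linarith)]
  rcases le_or_gt y (2 - Real.sqrt 2) with hy3 | hy3
  · rcases le_or_gt x (Real.sqrt 2 - 1) with hx2 | hx2
    · rw [FB hx0 hx2, FC hy2.le hy3]
      nlinarith [mul_nonneg (show (0:ℝ) ≤ Real.sqrt 2 - 1 - x by linarith)
          (show (0:ℝ) ≤ Real.sqrt 2 - 1 + x by linarith),
        mul_pos (show (0:ℝ) < Real.sqrt 2 - 1 by linarith)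
          (show (0:ℝ) < y - (Real.sqrt 2 - 1) by linarith)]
    · rw [FC hx2.le (le_trans hxy.le hy3), FC hy2.le hy3]
      nlinarith [mul_pos (sub_pos.2 hxy) (show (0:ℝ) < 1 + Real.sqrt 2/2 by linarith)]
  · rcases le_or_gt x (Real.sqrt 2 - 1) with hx2 | hx2
    · rw [FB hx0 hx2, FD hy3.le hy1]
      nlinarith [mul_nonneg (show (0:ℝ) ≤ Real.sqrt 2 - 1 - x by linarith)
          (show (0:ℝ) ≤ Real.sqrt 2 - 1 + x by linarith),
        mul_nonneg (show (0:ℝ) ≤ Real.sqrt 2 - 1 - (1 - y) by linarith)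
          (show (0:ℝ) ≤ Real.sqrt 2 - 1 + (1 - y) by linarith)]
    rcases le_or_gt x (2 - Real.sqrt 2) with hx3 | hx3
    · rw [FC hx2.le hx3, FD hy3.le hy1]
      nlinarith [mul_pos (show (0:ℝ) < Real.sqrt 2 - 1 - (1 - y) by linarith)
          (show (0:ℝ) < Real.sqrt 2 - 1 + (1 - y) by linarith),
        mul_nonneg (show (0:ℝ) ≤ 1 + Real.sqrt 2/2 by linarith)
          (show (0:ℝ) ≤ 2 - Real.sqrt 2 - x by linarith)]
    · rw [FD hx3.le hx1, FD hy3.le hy1]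
      nlinarith [mul_pos (sub_pos.2 hxy) (show (0:ℝ) < (1-x) + (1-y) by linarith)]

lemma Fbij : Set.BijOn F12 (Set.Icc 0 1) (Set.Icc 0 1) := by
  have h01 : F12 0 = 0 := FA le_rfl
  have h11 : F12 1 = 1 := FE le_rfl
  have hmono := Fmono.monotoneOn
  refine ⟨?_, Fmono.injOn, ?_⟩
  · intro x hx
    constructor
    · rw [← h01]
      exact hmono (Set.mem_Icc.2 ⟨le_rfl, zero_le_one⟩) hx hx.1
    · rw [← h11]
      exact hmono hx (Set.mem_Icc.2 ⟨zero_le_one, le_rfl⟩) hx.2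
  · intro t ht
    have := intermediate_value_Icc (zero_le_one (α := ℝ)) Fcont.continuousOn
    rw [h01, h11] at this
    exact this ht


/-- For `λ = 1/√2`, the explicitly given piecewise function `F12` satisfies the
self-similarity equation `F(x) = (1/2)(F(√2 x) + F(√2 x − (√2 − 1)))`, vanishes on
`(−∞,0]`, equals `1` on `[1,∞)`, and is a continuous strictly increasing bijection
of `[0,1]`. -/
theorem stmt12 :
    (∀ x : ℝ, x ≤ 0 → F12 x = 0) ∧
    (∀ x : ℝ, 1 ≤ x → F12 x = 1) ∧
    (∀ x : ℝ, F12 x = (1/2) * (F12 (Real.sqrt 2 * x)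
        + F12 (Real.sqrt 2 * x - (Real.sqrt 2 - 1)))) ∧
    Continuous F12 ∧
    StrictMonoOn F12 (Set.Icc 0 1) ∧
    Set.BijOn F12 (Set.Icc 0 1) (Set.Icc 0 1) := by
  exact ⟨fun _ h => FA h, fun _ h => FE h, Fself, Fcont, Fmono, Fbij⟩
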